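/- Let G be a finite undirected graph whose vertices are the irreducible components of the spectrum of a Noetherian local ring A satisfying S₂, with an edge between two components whenever their intersection has codimension 1 in Spec A. If dim A ≥ 1, then G is connected. -/

import Mathlib

/-- A local ring has depth at least one. -/
def DepthGeOne (R : Type*) [CommRing R] [IsLocalRing R] : Prop :=
  ∃ x ∈ IsLocalRing.maximalIdeal R, x ∈ nonZeroDivisors R

/-- A local ring has depth at least two (a regular sequence of length two in the maximal
ideal). -/
def DepthGeTwo (R : Type*) [CommRing R] [IsLocalRing R] : Prop :=
  ∃ x ∈ IsLocalRing.maximalIdeal R, x ∈ nonZeroDivisors R ∧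
    ∃ y ∈ IsLocalRing.maximalIdeal R,
      Ideal.Quotient.mk (Ideal.span {x}) y ∈ nonZeroDivisors (R ⧸ Ideal.span ({x} : Set R))

/-- Serre's condition `S₂` at a prime `q`. -/
def SerreS2At (A : Type*) [CommRing A] (q : PrimeSpectrum A) : Prop :=
  ((1 : ℕ∞) ≤ Order.height q → DepthGeOne (Localization.AtPrime q.asIdeal)) ∧
  ((2 : ℕ∞) ≤ Order.height q → DepthGeTwo (Localization.AtPrime q.asIdeal))

/-- Serre's condition `S₂`. -/
def SerreS2 (A : Type*) [CommRing A] : Prop := ∀ q, SerreS2At A q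

/-- The Hochster–Huneke (dual) graph of a ring: vertices are the minimal primes
(irreducible components of `Spec A`), with an edge between two distinct components
whenever there is a prime of height at most one containing both (i.e. their intersection
has codimension at most one in `Spec A`). -/
def hochsterHunekeGraph (A : Type*) [CommRing A] :
    SimpleGraph {p : Ideal A // p ∈ minimalPrimes A} where
  Adj p q := p ≠ q ∧ ∃ r : PrimeSpectrum A,
    p.1 ≤ r.asIdeal ∧ q.1 ≤ r.asIdeal ∧ Order.height r ≤ 1
  symm := by
    constructor
    rintro p q ⟨hne, r, h₁, h₂, h₃⟩
    exact ⟨hne.symm, r, h₂, h₁, h₃⟩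
  loopless := by constructor; rintro p ⟨hne, -⟩; exact hne rfl

lemma HH.reg_pow {R : Type*} [CommRing R] {x y : R} (hx : x ∈ nonZeroDivisors R)
    (hy : ∀ r, y * r ∈ Ideal.span {x} → r ∈ Ideal.span {x}) (n : ℕ) :
    ∀ r, y * r ∈ Ideal.span {x ^ n} → r ∈ Ideal.span ({x ^ n} : Set R) := by
  induction n with
  | zero => intro r _; exact Ideal.mem_span_singleton.mpr (by simp)
  | succ n ih =>
    intro r hr
    obtain ⟨s, hs⟩ := Ideal.mem_span_singleton.mp hr
    have hr1 : r ∈ Ideal.span ({x} : Set R) := by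
      refine hy r (Ideal.mem_span_singleton.mpr ⟨x ^ n * s, ?_⟩)
      rw [hs]; ring
    obtain ⟨r', hr'⟩ := Ideal.mem_span_singleton.mp hr1
    have h0 : (y * r' - x ^ n * s) * x = 0 := by linear_combination hs - y * hr'
    have h1 : y * r' = x ^ n * s := sub_eq_zero.mp ((mem_nonZeroDivisors_iff.mp hx).2 _ h0)
    obtain ⟨t, ht⟩ := Ideal.mem_span_singleton.mp (ih r' (Ideal.mem_span_singleton.mpr ⟨s, h1⟩))
    exact Ideal.mem_span_singleton.mpr ⟨t, by rw [hr', ht]; ring⟩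

lemma HH.reg_pow' {R : Type*} [CommRing R] {y : R} {K : Ideal R}
    (hy : ∀ r, y * r ∈ K → r ∈ K) (m : ℕ) :
    ∀ r, y ^ m * r ∈ K → r ∈ K := by
  induction m with
  | zero => intro r hr; simpa using hr
  | succ m ih =>
    intro r hr
    exact hy r (ih (y * r) (by rw [← mul_assoc, ← pow_succ]; exact hr))

/-- key depth-two lemma -/
lemma HH.depth_two_aux {R : Type*} [CommRing R] [IsLocalRing R] (h2 : DepthGeTwo R)
    (K L : Ideal R) (hKL : K * L = ⊥)
    (hrad : IsLocalRing.maximalIdeal R ≤ (K ⊔ L).radical) : K = ⊥ ∨ L = ⊥ := by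
  obtain ⟨x, hxm, hxnzd, y, hym, hynzd⟩ := h2
  -- translate quotient nonzerodivisor
  have hy : ∀ r, y * r ∈ Ideal.span ({x} : Set R) → r ∈ Ideal.span ({x} : Set R) := by
    intro r hr
    have h0 : Ideal.Quotient.mk (Ideal.span {x}) r * Ideal.Quotient.mk (Ideal.span {x}) y = 0 := by
      rw [← map_mul, mul_comm, Ideal.Quotient.eq_zero_iff_mem]
      exact hr
    exact Ideal.Quotient.eq_zero_iff_mem.mp ((mem_nonZeroDivisors_iff.mp hynzd).2 _ h0)
  obtain ⟨n, hn⟩ := hrad hxm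
  obtain ⟨m, hm⟩ := hrad hym
  obtain ⟨a, ha, b, hb, hab⟩ := Submodule.mem_sup.mp hn
  obtain ⟨c, hc, d, hd, hcd⟩ := Submodule.mem_sup.mp hm
  have hKLmem : ∀ {s t : R}, s ∈ K → t ∈ L → s * t = 0 := by
    intro s t hs ht
    have := Ideal.mul_mem_mul hs ht
    rwa [hKL, Ideal.mem_bot] at this
  have hab0 : a * b = 0 := hKLmem ha hb
  have had0 : a * d = 0 := hKLmem ha hd
  have hcb0 : c * b = 0 := hKLmem hc hb
  -- a * y^m = c * x^n
  have key : y ^ m * a = c * x ^ n := by linear_combination -(a * hcd) + c * hab + had0 - hcb0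
  have hmemJ : y ^ m * a ∈ Ideal.span ({x ^ n} : Set R) := by
    rw [key]; exact Ideal.mem_span_singleton.mpr (Dvd.intro_left c rfl)
  obtain ⟨a', ha'⟩ := Ideal.mem_span_singleton.mp (HH.reg_pow' (HH.reg_pow hxnzd hy n) m a hmemJ)
  -- a' is idempotent
  have haau : a * a = a * x ^ n := by linear_combination a * hab - hab0
  have hxn2 : x ^ n * x ^ n ∈ nonZeroDivisors R :=
    mul_mem (pow_mem hxnzd n) (pow_mem hxnzd n)
  have hidem : a' * a' = a' := by
    have h0 : (a' * a' - a') * (x ^ n * x ^ n) = 0 := by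
      linear_combination haau + (x ^ n - x ^ n * a' - a) * ha'
    exact sub_eq_zero.mp ((mem_nonZeroDivisors_iff.mp hxn2).2 _ h0)
  rcases IsLocalRing.isUnit_or_isUnit_one_sub_self a' with hu | hu
  · -- a' is a unit : a' = 1, a = x^n, so L = ⊥
    have ha1 : a' = 1 := by
      have h1a : a' * (a' - 1) = a' * 0 := by rw [mul_zero]; linear_combination hidem
      have := hu.mul_left_cancel h1a
      exact sub_eq_zero.mp this
    right
    rw [eq_bot_iff]
    intro l hl
    rw [Ideal.mem_bot]
    have haxn : a = x ^ n := by rw [ha', ha1, mul_one]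
    have : l * x ^ n = 0 := by
      rw [← haxn, mul_comm]; exact hKLmem ha hl
    exact (mem_nonZeroDivisors_iff.mp (pow_mem hxnzd n)).2 _ this
  · -- 1 - a' unit : a' = 0, a = 0, b = x^n, so K = ⊥
    have ha0 : a' = 0 := by
      have h1a : (1 - a') * a' = (1 - a') * 0 := by rw [mul_zero]; linear_combination -hidem
      exact hu.mul_left_cancel h1a
    left
    rw [eq_bot_iff]
    intro k hk
    rw [Ideal.mem_bot]
    have hbxn : b = x ^ n := by
      have : a = 0 := by rw [ha', ha0, mul_zero]
      rw [this, zero_add] at hab; exact hab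
    have : k * x ^ n = 0 := by rw [← hbxn]; exact hKLmem hk hb
    exact (mem_nonZeroDivisors_iff.mp (pow_mem hxnzd n)).2 _ this

/-- Hochster–Huneke: Let `A` be a Noetherian local ring satisfying Serre's
condition `S₂` with `dim A ≥ 1`.  Then the Hochster–Huneke graph, whose vertices are the
irreducible components of `Spec A` with edges given by codimension-one intersections, is
connected. -/
theorem hochsterHunekeGraph_connected
    (A : Type) [CommRing A] [IsNoetherianRing A] [IsLocalRing A]
    (hS2 : SerreS2 A) (hdim : 1 ≤ ringKrullDim A) :
    (hochsterHunekeGraph A).Connected := by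
  classical
  haveI : Finite {p : Ideal A // p ∈ minimalPrimes A} :=
    (minimalPrimes.finite_of_isNoetherianRing A).to_subtype
  haveI := Fintype.ofFinite {p : Ideal A // p ∈ minimalPrimes A}
  obtain ⟨p₀, hp₀, -⟩ :=
    Ideal.exists_minimalPrimes_le (bot_le : (⊥ : Ideal A) ≤ IsLocalRing.maximalIdeal A)
  rw [SimpleGraph.connected_iff]
  refine ⟨fun v w => ?_, ⟨⟨p₀, hp₀⟩⟩⟩
  by_contra hvw
  set G := hochsterHunekeGraph A with hG
  set S : Finset {p : Ideal A // p ∈ minimalPrimes A} :=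
    Finset.univ.filter (fun z => G.Reachable v z) with hS
  set I : Ideal A := S.inf (fun z => z.1) with hI
  set J : Ideal A := Sᶜ.inf (fun z => z.1) with hJ
  -- the sum is contained in the maximal ideal
  have hmem_max : ∀ p : {p : Ideal A // p ∈ minimalPrimes A},
      p.1 ≤ IsLocalRing.maximalIdeal A :=
    fun p => IsLocalRing.le_maximalIdeal p.2.1.1.ne_top
  have hvS : v ∈ S := Finset.mem_filter.mpr ⟨Finset.mem_univ _, SimpleGraph.Reachable.refl v⟩
  have hwT : w ∈ Sᶜ := Finset.mem_compl.mpr (fun hw => hvw (Finset.mem_filter.mp hw).2)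
  have hIJmax : I ⊔ J ≤ IsLocalRing.maximalIdeal A :=
    sup_le (le_trans (Finset.inf_le hvS) (hmem_max v)) (le_trans (Finset.inf_le hwT) (hmem_max w))
  obtain ⟨q, hq, -⟩ := Ideal.exists_minimalPrimes_le hIJmax
  have hqP : q.IsPrime := hq.1.1
  haveI := hqP
  have hqIJ : I ⊔ J ≤ q := hq.1.2
  -- pick minimal primes on each side below q
  obtain ⟨z, hzS, hzq⟩ := (Ideal.IsPrime.inf_le' hqP).mp (le_trans le_sup_left hqIJ)
  obtain ⟨z', hz'T, hz'q⟩ := (Ideal.IsPrime.inf_le' hqP).mp (le_trans le_sup_right hqIJ)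
  have hzR : G.Reachable v z := (Finset.mem_filter.mp hzS).2
  have hz'R : ¬ G.Reachable v z' := fun h =>
    (Finset.mem_compl.mp hz'T) (Finset.mem_filter.mpr ⟨Finset.mem_univ _, h⟩)
  have hne : z ≠ z' := fun h => hz'R (h ▸ hzR)
  have hnadj : ¬ G.Adj z z' := fun hadj => hz'R (hzR.trans hadj.reachable)
  -- height of q is at least 2
  have hh2 : (2 : ℕ∞) ≤ Order.height (⟨q, hqP⟩ : PrimeSpectrum A) := by
    have hh : ¬ (Order.height (⟨q, hqP⟩ : PrimeSpectrum A) ≤ 1) := fun h =>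
      hnadj ⟨hne, ⟨q, hqP⟩, hzq, hz'q, h⟩
    have h := (ENat.add_one_le_iff (by norm_num : (1 : ℕ∞) ≠ ⊤)).mpr (not_le.mp hh)
    simpa [one_add_one_eq_two] using h
  have hdepth : DepthGeTwo (Localization.AtPrime q) := (hS2 ⟨q, hqP⟩).2 hh2
  -- nilpotency of I ⊓ J
  obtain ⟨k, hk⟩ := IsNoetherianRing.isNilpotent_nilradical A
  have hIJnil : I ⊓ J ≤ nilradical A := by
    rw [nilradical_eq_sInf]
    refine le_sInf fun r hr => ?_
    haveI : r.IsPrime := hr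
    obtain ⟨ps, hps, hpsr⟩ := Ideal.exists_minimalPrimes_le (bot_le : (⊥ : Ideal A) ≤ r)
    by_cases hc : (⟨ps, hps⟩ : {p : Ideal A // p ∈ minimalPrimes A}) ∈ S
    · exact le_trans (le_trans inf_le_left (Finset.inf_le hc)) hpsr
    · exact le_trans (le_trans inf_le_right (Finset.inf_le (Finset.mem_compl.mpr hc))) hpsr
  have hIJ0 : I ^ (k + 1) * J ^ (k + 1) = ⊥ := by
    rw [eq_bot_iff, ← mul_pow]
    calc (I * J) ^ (k + 1) ≤ (I ⊓ J) ^ (k + 1) := Ideal.pow_right_mono Ideal.mul_le_inf _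
      _ ≤ (nilradical A) ^ (k + 1) := Ideal.pow_right_mono hIJnil _
      _ = (nilradical A) ^ k * nilradical A := pow_succ _ _
      _ ≤ ⊥ := by rw [hk]; simp
  -- pass to the localization
  set R := Localization.AtPrime q with hR
  set f := algebraMap A R with hf
  set K := Ideal.map f (I ^ (k + 1)) with hK
  set L := Ideal.map f (J ^ (k + 1)) with hL
  have hKL : K * L = ⊥ := by rw [hK, hL, ← Ideal.map_mul, hIJ0, Ideal.map_bot]
  have hmapq : Ideal.map f q = IsLocalRing.maximalIdeal R :=
    Localization.AtPrime.map_eq_maximalIdeal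
  have hcomapmax : Ideal.comap f (IsLocalRing.maximalIdeal R) = q :=
    Localization.AtPrime.comap_maximalIdeal
  have hrad : IsLocalRing.maximalIdeal R ≤ (K ⊔ L).radical := by
    rw [Ideal.radical_eq_sInf]
    refine le_sInf ?_
    rintro P ⟨hKLP, hP⟩
    haveI := hP
    have hPmax : P ≤ IsLocalRing.maximalIdeal R := IsLocalRing.le_maximalIdeal hP.ne_top
    have hrPrime : (Ideal.comap f P).IsPrime := Ideal.IsPrime.comap f
    have hrq : Ideal.comap f P ≤ q :=
      le_trans (Ideal.comap_mono hPmax) (le_of_eq hcomapmax)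
    have hside : ∀ M : Ideal A, Ideal.map f (M ^ (k + 1)) ≤ K ⊔ L → M ≤ Ideal.comap f P := by
      intro M hMle
      have h1 : M ^ (k + 1) ≤ Ideal.comap f P :=
        le_trans Ideal.le_comap_map (Ideal.comap_mono (le_trans hMle hKLP))
      have h2 : (M ^ (k + 1)).radical ≤ (Ideal.comap f P).radical := Ideal.radical_mono h1
      rw [Ideal.radical_pow M (Nat.succ_ne_zero k), hrPrime.radical] at h2
      exact le_trans Ideal.le_radical h2
    have hIr : I ≤ Ideal.comap f P := hside I le_sup_left
    have hJr : J ≤ Ideal.comap f P := hside J le_sup_right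
    have hqr : q ≤ Ideal.comap f P := hq.2 ⟨hrPrime, sup_le hIr hJr⟩ hrq
    have hreq : Ideal.comap f P = q := le_antisymm hrq hqr
    have : P = IsLocalRing.maximalIdeal R := by
      rw [← IsLocalization.map_comap q.primeCompl R P, show Ideal.under A P = q from hreq]; exact hmapq
    exact this.ge
  -- the key inner lemma: if the radical of one side's image is everything, q is minimal
  have side : ∀ zz : {p : Ideal A // p ∈ minimalPrimes A}, zz.1 ≤ q →
      IsLocalRing.maximalIdeal R ≤ (Ideal.map f zz.1).radical → q ∈ minimalPrimes A := by
    intro zz hzzq hle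
    have hdisj : Disjoint (q.primeCompl : Set A) (zz.1 : Set A) :=
      Set.disjoint_left.mpr fun a ha ha' => ha (hzzq ha')
    have hPz : (Ideal.map f zz.1).IsPrime :=
      IsLocalization.isPrime_of_isPrime_disjoint q.primeCompl R zz.1 zz.2.1.1 hdisj
    have heq : Ideal.map f zz.1 = IsLocalRing.maximalIdeal R :=
      le_antisymm (by rw [← hmapq]; exact Ideal.map_mono hzzq)
        (le_trans hle (le_of_eq hPz.radical))
    have hzzq' : zz.1 = q := by
      have h : Ideal.comap f (Ideal.map f zz.1) = zz.1 :=
        IsLocalization.under_map_of_isPrime_disjoint q.primeCompl R zz.2.1.1 hdisj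
      rw [heq, hcomapmax] at h
      exact h.symm
    exact hzzq' ▸ zz.2
  have final : q ∈ minimalPrimes A → False := by
    intro hqmin
    have h1 : q ≤ z.1 := hqmin.2 ⟨z.2.1.1, bot_le⟩ hzq
    have h2 : q ≤ z'.1 := hqmin.2 ⟨z'.2.1.1, bot_le⟩ hz'q
    exact hne (Subtype.ext ((le_antisymm hzq h1).trans (le_antisymm h2 hz'q)))
  rcases HH.depth_two_aux hdepth K L hKL hrad with hK0 | hL0
  · -- K = ⊥ : the J-side collapses onto q, so q = z'.1 is minimal
    refine final (side z' hz'q ?_)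
    refine le_trans hrad ?_
    rw [hK0, bot_sup_eq]
    refine le_trans (Ideal.radical_mono (Ideal.map_mono ?_)) le_rfl
    exact le_trans (Ideal.pow_le_self (Nat.succ_ne_zero k)) (Finset.inf_le hz'T)
  · refine final (side z hzq ?_)
    refine le_trans hrad ?_
    rw [hL0, sup_bot_eq]
    refine le_trans (Ideal.radical_mono (Ideal.map_mono ?_)) le_rfl
    exact le_trans (Ideal.pow_le_self (Nat.succ_ne_zero k)) (Finset.inf_le hzS)
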